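/- Additivity of E_Hmin: for multipartite pure states |ψ_1⟩ and |ψ_2⟩ (on disjoint collections of subsystems), E_Hmin(|ψ_1⟩ ⊗ |ψ_2⟩) = E_Hmin(|ψ_1⟩) + E_Hmin(|ψ_2⟩). -/

import Mathlib

open scoped BigOperators

/-- Shannon entropy of a finite family of reals (with the convention `0 log 0 = 0`). -/
noncomputable def Hsh {ι : Type*} [Fintype ι] (p : ι → ℝ) : ℝ :=
  ∑ i, Real.negMulLog (p i)

/-- Measurement entropy of a multipartite pure state: Shannon entropy of the squared
moduli of the computational-basis amplitudes. -/
noncomputable def Hmeas {ι : Type*} [Fintype ι] [DecidableEq ι] {d : ι → ℕ}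
    (ψ : (∀ k, Fin (d k)) → ℂ) : ℝ :=
  ∑ i, Real.negMulLog (‖ψ i‖ ^ 2)

/-- Application of a local (one-subsystem-wise) linear transformation
`U_1 ⊗ ... ⊗ U_n` to a multipartite state. -/
noncomputable def applyLocal {ι : Type*} [Fintype ι] [DecidableEq ι] {d : ι → ℕ}
    (U : ∀ k, Matrix (Fin (d k)) (Fin (d k)) ℂ) (ψ : (∀ k, Fin (d k)) → ℂ) :
    (∀ k, Fin (d k)) → ℂ :=
  fun i => ∑ j, (∏ k, U k (i k) (j k)) * ψ j

/-- `E_Hmin`: the minimum over local unitaries of the measurement entropy. -/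
noncomputable def EHmin {ι : Type*} [Fintype ι] [DecidableEq ι] {d : ι → ℕ}
    (ψ : (∀ k, Fin (d k)) → ℂ) : ℝ :=
  ⨅ U : ∀ k, Matrix.unitaryGroup (Fin (d k)) ℂ,
    Hmeas (applyLocal (fun k => (U k : Matrix (Fin (d k)) (Fin (d k)) ℂ)) ψ)

/- ### Auxiliary lemmas -/

lemma unitary_col (n : ℕ) (U : Matrix.unitaryGroup (Fin n) ℂ) (a b : Fin n) :
    ∑ x, (starRingEnd ℂ) ((U : Matrix (Fin n) (Fin n) ℂ) x a) * (U : Matrix (Fin n) (Fin n) ℂ) x b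
      = if a = b then 1 else 0 := by
  have h : (star (U : Matrix (Fin n) (Fin n) ℂ) * (U : Matrix (Fin n) (Fin n) ℂ)) a b
      = (1 : Matrix (Fin n) (Fin n) ℂ) a b := by
    rw [U.2.1]
  simpa [Matrix.mul_apply, Matrix.star_apply, Matrix.one_apply, Complex.star_def] using h

lemma applyLocal_inner' {ι : Type*} [Fintype ι] [DecidableEq ι] {d : ι → ℕ}
    (V : ∀ k, Matrix (Fin (d k)) (Fin (d k)) ℂ)
    (hV : ∀ k a b, ∑ x, (starRingEnd ℂ) (V k x a) * V k x b = if a = b then 1 else 0)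
    (ψ : (∀ k, Fin (d k)) → ℂ) :
    ∑ i, (starRingEnd ℂ) (applyLocal V ψ i) * applyLocal V ψ i
      = ∑ j, (starRingEnd ℂ) (ψ j) * ψ j := by
  unfold applyLocal
  simp only [map_sum, map_mul, map_prod]
  calc
    ∑ i : (∀ k, Fin (d k)), (∑ j : (∀ k, Fin (d k)), (∏ k, (starRingEnd ℂ) (V k (i k) (j k))) * (starRingEnd ℂ) (ψ j))
        * (∑ j : (∀ k, Fin (d k)), (∏ k, V k (i k) (j k)) * ψ j)
      = ∑ j : (∀ k, Fin (d k)), ∑ j' : (∀ k, Fin (d k)), (∑ i : (∀ k, Fin (d k)), ∏ k, (starRingEnd ℂ) (V k (i k) (j k)) * V k (i k) (j' k))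
          * ((starRingEnd ℂ) (ψ j) * ψ j') := by
        simp_rw [Finset.sum_mul_sum, Finset.sum_mul]
        rw [Finset.sum_comm]
        refine Finset.sum_congr rfl fun j _ => ?_
        rw [Finset.sum_comm]
        refine Finset.sum_congr rfl fun j' _ => Finset.sum_congr rfl fun i _ => ?_
        rw [Finset.prod_mul_distrib]
        ring
    _ = ∑ j : (∀ k, Fin (d k)), ∑ j' : (∀ k, Fin (d k)), (if j = j' then (1:ℂ) else 0) * ((starRingEnd ℂ) (ψ j) * ψ j') := by
        refine Finset.sum_congr rfl fun j _ => Finset.sum_congr rfl fun j' _ => ?_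
        congr 1
        rw [← Fintype.prod_sum fun k x => (starRingEnd ℂ) (V k x (j k)) * V k x (j' k)]
        simp_rw [hV]
        by_cases h : j = j'
        · simp [h]
        · simp only [h, if_false]
          obtain ⟨k, hk⟩ : ∃ k, j k ≠ j' k := by
            by_contra hc
            push_neg at hc
            exact h (funext hc)
          exact Finset.prod_eq_zero (Finset.mem_univ k) (by simp [hk])
    _ = ∑ j : (∀ k, Fin (d k)), (starRingEnd ℂ) (ψ j) * ψ j := by
        simp [Finset.sum_ite_eq]

lemma conj_mul_self (z : ℂ) : (starRingEnd ℂ) z * z = ((‖z‖ ^ 2 : ℝ) : ℂ) := by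
  rw [mul_comm, Complex.mul_conj, Complex.normSq_eq_norm_sq]

/-- Norm preservation of `applyLocal` under local unitaries. -/
lemma sum_sq_applyLocal {ι : Type*} [Fintype ι] [DecidableEq ι] {d : ι → ℕ}
    (U : ∀ k, Matrix.unitaryGroup (Fin (d k)) ℂ) (ψ : (∀ k, Fin (d k)) → ℂ) :
    ∑ i, ‖applyLocal (fun k => (U k : Matrix (Fin (d k)) (Fin (d k)) ℂ)) ψ i‖ ^ 2
      = ∑ i, ‖ψ i‖ ^ 2 := by
  have key := applyLocal_inner' (fun k => (U k : Matrix (Fin (d k)) (Fin (d k)) ℂ))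
    (fun k a b => unitary_col (d k) (U k) a b) ψ
  simp_rw [conj_mul_self] at key
  exact_mod_cast key

/-- Factorization of `applyLocal` on a product state. -/
lemma applyLocal_prod {ι κ : Type*} [Fintype ι] [Fintype κ] [DecidableEq ι] [DecidableEq κ]
    {d1 : ι → ℕ} {d2 : κ → ℕ}
    (ψ1 : (∀ k, Fin (d1 k)) → ℂ) (ψ2 : (∀ k, Fin (d2 k)) → ℂ)
    (ψ12 : (∀ k : ι ⊕ κ, Fin (Sum.elim d1 d2 k)) → ℂ)
    (hψ12 : ∀ i, ψ12 i = ψ1 (fun a => i (Sum.inl a)) * ψ2 (fun b => i (Sum.inr b)))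
    (W : ∀ k : ι ⊕ κ, Matrix (Fin (Sum.elim d1 d2 k)) (Fin (Sum.elim d1 d2 k)) ℂ)
    (i : ∀ k : ι ⊕ κ, Fin (Sum.elim d1 d2 k)) :
    applyLocal W ψ12 i
      = applyLocal (fun a => W (Sum.inl a)) ψ1 (fun a => i (Sum.inl a))
        * applyLocal (fun b => W (Sum.inr b)) ψ2 (fun b => i (Sum.inr b)) := by
  unfold applyLocal
  rw [Finset.sum_mul_sum]
  let e := (Equiv.sumPiEquivProdPi (fun k => Fin (Sum.elim d1 d2 k))).symm
  rw [← Equiv.sum_comp e (fun j => (∏ k, W k (i k) (j k)) * ψ12 j)]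
  rw [Fintype.sum_prod_type]
  refine Finset.sum_congr rfl fun j1 _ => Finset.sum_congr rfl fun j2 _ => ?_
  have hL : (fun a => e (j1, j2) (Sum.inl a)) = j1 := rfl
  have hR : (fun b => e (j1, j2) (Sum.inr b)) = j2 := rfl
  have hl : ∀ a, e (j1, j2) (Sum.inl a) = j1 a := fun a => rfl
  have hr : ∀ b, e (j1, j2) (Sum.inr b) = j2 b := fun b => rfl
  rw [hψ12, Fintype.prod_sum_type (fun k => W k (i k) (e (j1, j2) k))]
  rw [hL, hR]
  simp_rw [hl, hr]
  ring

/-- Measurement entropy of a product of normalized states. -/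
lemma Hmeas_prod {ι κ : Type*} [Fintype ι] [Fintype κ] [DecidableEq ι] [DecidableEq κ]
    {d1 : ι → ℕ} {d2 : κ → ℕ}
    (φ1 : (∀ k, Fin (d1 k)) → ℂ) (φ2 : (∀ k, Fin (d2 k)) → ℂ)
    (h1 : ∑ i, ‖φ1 i‖ ^ 2 = 1) (h2 : ∑ i, ‖φ2 i‖ ^ 2 = 1)
    (φ : (∀ k : ι ⊕ κ, Fin (Sum.elim d1 d2 k)) → ℂ)
    (hφ : ∀ i, φ i = φ1 (fun a => i (Sum.inl a)) * φ2 (fun b => i (Sum.inr b))) :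
    Hmeas φ = Hmeas φ1 + Hmeas φ2 := by
  unfold Hmeas
  let e := (Equiv.sumPiEquivProdPi (fun k => Fin (Sum.elim d1 d2 k))).symm
  rw [← Equiv.sum_comp e (fun i => Real.negMulLog (‖φ i‖ ^ 2))]
  rw [Fintype.sum_prod_type]
  have key : ∀ (j1 : ∀ a, Fin (d1 a)) (j2 : ∀ b, Fin (d2 b)),
      Real.negMulLog (‖φ (e (j1, j2))‖ ^ 2)
        = ‖φ2 j2‖ ^ 2 * Real.negMulLog (‖φ1 j1‖ ^ 2)
          + ‖φ1 j1‖ ^ 2 * Real.negMulLog (‖φ2 j2‖ ^ 2) := by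
    intro j1 j2
    have hL : (fun a => e (j1, j2) (Sum.inl a)) = j1 := rfl
    have hR : (fun b => e (j1, j2) (Sum.inr b)) = j2 := rfl
    rw [hφ, hL, hR, norm_mul, mul_pow, Real.negMulLog_mul]
  calc ∑ j1, ∑ j2, Real.negMulLog (‖φ (e (j1, j2))‖ ^ 2)
      = ∑ j1 : (∀ a, Fin (d1 a)), ∑ j2 : (∀ b, Fin (d2 b)),
          (‖φ2 j2‖ ^ 2 * Real.negMulLog (‖φ1 j1‖ ^ 2)
            + ‖φ1 j1‖ ^ 2 * Real.negMulLog (‖φ2 j2‖ ^ 2)) := by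
        exact Finset.sum_congr rfl fun j1 _ => Finset.sum_congr rfl fun j2 _ => key j1 j2
    _ = ∑ j1, Real.negMulLog (‖φ1 j1‖ ^ 2) + ∑ j2, Real.negMulLog (‖φ2 j2‖ ^ 2) := by
        simp_rw [Finset.sum_add_distrib, ← Finset.sum_mul, ← Finset.mul_sum, h2]
        rw [← Finset.sum_mul, h1]; ring
    _ = _ := rfl

lemma Hmeas_nonneg {ι : Type*} [Fintype ι] [DecidableEq ι] {d : ι → ℕ}
    (φ : (∀ k, Fin (d k)) → ℂ) (h : ∑ i, ‖φ i‖ ^ 2 = 1) : 0 ≤ Hmeas φ := by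
  refine Finset.sum_nonneg fun i _ => Real.negMulLog_nonneg (by positivity) ?_
  calc ‖φ i‖ ^ 2 ≤ ∑ j, ‖φ j‖ ^ 2 :=
        Finset.single_le_sum (f := fun j => ‖φ j‖ ^ 2)
          (fun j _ => by positivity) (Finset.mem_univ i)
    _ = 1 := h

lemma iInf_equiv_real {α β : Type*} (e : α ≃ β) (f : β → ℝ) :
    ⨅ a, f (e a) = ⨅ b, f b := by
  rw [iInf, iInf]
  congr 1
  exact e.surjective.range_comp f

lemma ciInf_prod_add {A B : Type*} [Nonempty A] [Nonempty B] (F : A → ℝ) (G : B → ℝ)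
    (hF : ∀ a, 0 ≤ F a) (hG : ∀ b, 0 ≤ G b) :
    ⨅ p : A × B, (F p.1 + G p.2) = (⨅ a, F a) + ⨅ b, G b := by
  have bF : BddBelow (Set.range F) := ⟨0, by rintro _ ⟨a, rfl⟩; exact hF a⟩
  have bG : BddBelow (Set.range G) := ⟨0, by rintro _ ⟨b, rfl⟩; exact hG b⟩
  have bP : BddBelow (Set.range fun p : A × B => F p.1 + G p.2) :=
    ⟨0, by rintro _ ⟨p, rfl⟩; exact add_nonneg (hF p.1) (hG p.2)⟩
  refine le_antisymm ?_ ?_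
  · exact le_ciInf_add_ciInf fun a b => ciInf_le bP (a, b)
  · exact le_ciInf fun p => add_le_add (ciInf_le bF p.1) (ciInf_le bG p.2)

/-- Additivity of `E_Hmin`: for multipartite pure states `ψ₁`, `ψ₂` on disjoint collections
of subsystems, `E_Hmin(ψ₁ ⊗ ψ₂) = E_Hmin(ψ₁) + E_Hmin(ψ₂)`. -/
theorem EHmin_additive {ι κ : Type*} [Fintype ι] [Fintype κ] [DecidableEq ι] [DecidableEq κ]
    {d1 : ι → ℕ} {d2 : κ → ℕ}
    (ψ1 : (∀ k, Fin (d1 k)) → ℂ) (ψ2 : (∀ k, Fin (d2 k)) → ℂ)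
    (h1 : ∑ i, ‖ψ1 i‖ ^ 2 = 1) (h2 : ∑ i, ‖ψ2 i‖ ^ 2 = 1)
    (ψ12 : (∀ k : ι ⊕ κ, Fin (Sum.elim d1 d2 k)) → ℂ)
    (hψ12 : ∀ i, ψ12 i = ψ1 (fun a => i (Sum.inl a)) * ψ2 (fun b => i (Sum.inr b))) :
    EHmin ψ12 = EHmin ψ1 + EHmin ψ2 := by
  classical
  have hne1 : ∀ n : ℕ, Nonempty (Matrix.unitaryGroup (Fin n) ℂ) := fun n => ⟨1⟩
  haveI : ∀ k : ι ⊕ κ, Nonempty (Matrix.unitaryGroup (Fin (Sum.elim d1 d2 k)) ℂ) :=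
    fun k => hne1 _
  haveI : ∀ a : ι, Nonempty (Matrix.unitaryGroup (Fin (d1 a)) ℂ) := fun a => hne1 _
  haveI : ∀ b : κ, Nonempty (Matrix.unitaryGroup (Fin (d2 b)) ℂ) := fun b => hne1 _
  set F : (∀ a, Matrix.unitaryGroup (Fin (d1 a)) ℂ) → ℝ :=
    fun U => Hmeas (applyLocal (fun a => (U a : Matrix (Fin (d1 a)) (Fin (d1 a)) ℂ)) ψ1) with hF
  set G : (∀ b, Matrix.unitaryGroup (Fin (d2 b)) ℂ) → ℝ :=
    fun U => Hmeas (applyLocal (fun b => (U b : Matrix (Fin (d2 b)) (Fin (d2 b)) ℂ)) ψ2) with hG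
  have hFnn : ∀ U, 0 ≤ F U := fun U =>
    Hmeas_nonneg _ ((sum_sq_applyLocal U ψ1).trans h1)
  have hGnn : ∀ U, 0 ≤ G U := fun U =>
    Hmeas_nonneg _ ((sum_sq_applyLocal U ψ2).trans h2)
  have key : ∀ W : ∀ k : ι ⊕ κ, Matrix.unitaryGroup (Fin (Sum.elim d1 d2 k)) ℂ,
      Hmeas (applyLocal (fun k => (W k : Matrix (Fin (Sum.elim d1 d2 k)) (Fin (Sum.elim d1 d2 k)) ℂ)) ψ12)
        = F (fun a => W (Sum.inl a)) + G (fun b => W (Sum.inr b)) := by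
    intro W
    refine Hmeas_prod _ _ ?_ ?_ _ ?_
    · exact (sum_sq_applyLocal (fun a => W (Sum.inl a)) ψ1).trans h1
    · exact (sum_sq_applyLocal (fun b => W (Sum.inr b)) ψ2).trans h2
    · intro i
      exact applyLocal_prod ψ1 ψ2 ψ12 hψ12
        (fun k => (W k : Matrix (Fin (Sum.elim d1 d2 k)) (Fin (Sum.elim d1 d2 k)) ℂ)) i
  calc EHmin ψ12
      = ⨅ W : ∀ k : ι ⊕ κ, Matrix.unitaryGroup (Fin (Sum.elim d1 d2 k)) ℂ,
          (F (fun a => W (Sum.inl a)) + G (fun b => W (Sum.inr b))) := by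
        unfold EHmin
        exact congrArg _ (funext key)
    _ = ⨅ p : (∀ a, Matrix.unitaryGroup (Fin (d1 a)) ℂ) × (∀ b, Matrix.unitaryGroup (Fin (d2 b)) ℂ),
          (F p.1 + G p.2) := by
        rw [← iInf_equiv_real
          (Equiv.sumPiEquivProdPi
            (fun k : ι ⊕ κ => Matrix.unitaryGroup (Fin (Sum.elim d1 d2 k)) ℂ)).symm
          (fun W => F (fun a => W (Sum.inl a)) + G (fun b => W (Sum.inr b)))]
        exact congrArg _ (funext fun p => rfl)
    _ = (⨅ U, F U) + ⨅ U, G U := ciInf_prod_add F G hFnn hGnn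
    _ = EHmin ψ1 + EHmin ψ2 := rfl
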